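/- Let Λ be the homology ring of the affine Grassmannian with Schubert basis {ξ_w : w ∈ W_a^{Λ₀}} and factorization property ξ_{w ⋆ t_{ω_i}} = ξ_w · ξ_{t_{ω_i}} for all w ∈ W_a^{Λ₀} and fundamental weights ω_i. Then the elements ξ_{t_{ω_1}}, …, ξ_{t_{ω_n}} are algebraically independent over ℚ. -/

import Mathlib

/-- Let `Λ` be the homology ring of the affine Grassmannian, a commutative
`ℚ`-algebra with Schubert basis `{ξ_w : w ∈ W_a^{Λ₀}}`, and suppose (factorization property)
that for each multi-exponent `m` the monomial `ξ_{t_{ω_1}}^{m_1} ⋯ ξ_{t_{ω_n}}^{m_n}` is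
itself a basis element `ξ_{idx m}`, distinct monomials giving distinct basis elements.
Then the elements `ξ_{t_{ω_1}}, …, ξ_{t_{ω_n}}` are algebraically independent over `ℚ`. -/
theorem stmt_13 {Λ : Type*} [CommRing Λ] [Algebra ℚ Λ] {Wgr : Type*}
    (ξ : Module.Basis Wgr ℚ Λ) {n : ℕ} (x : Fin n → Λ)
    (idx : (Fin n → ℕ) → Wgr) (hinj : Function.Injective idx)
    (hmon : ∀ m : Fin n → ℕ, ξ (idx m) = ∏ i : Fin n, x i ^ m i) :
    AlgebraicIndependent ℚ x := by
  rw [algebraicIndependent_iff]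
  intro p hp
  have key : ∀ d : Fin n →₀ ℕ,
      MvPolynomial.aeval x (MvPolynomial.monomial d (MvPolynomial.coeff d p))
        = MvPolynomial.coeff d p • ξ (idx ⇑d) := by
    intro d
    rw [MvPolynomial.aeval_monomial, hmon, Finsupp.prod_fintype _ _ (fun i => pow_zero _),
      Algebra.smul_def]
  have hsum : (0 : Λ) = ∑ d ∈ p.support, MvPolynomial.coeff d p • ξ (idx ⇑d) := by
    rw [← hp]
    conv_lhs => rw [p.as_sum]
    rw [map_sum]
    exact Finset.sum_congr rfl fun d _ => key d
  ext d
  by_cases hd : d ∈ p.support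
  · have h2 := congrArg (fun y => (ξ.repr y) (idx ⇑d)) hsum
    simp only [map_zero, Finsupp.coe_zero, Pi.zero_apply, map_sum, map_smul,
      Module.Basis.repr_self, Finsupp.smul_single, smul_eq_mul, mul_one, Finsupp.coe_finset_sum,
      Finset.sum_apply, Finsupp.single_apply] at h2
    rw [Finset.sum_eq_single d] at h2
    · simp at h2
      exact h2.symm
    · intro e he hne
      exact Finsupp.single_eq_of_ne' (fun hcontra => hne (DFunLike.coe_injective (hinj hcontra)))
    · intro h; exact absurd hd h
  · simpa using (MvPolynomial.notMem_support_iff.mp hd)
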